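/- Let M, m > 0, set φ = arctan(√(m/M)), and define billiard velocities W = √M·V, w = √m·v. If (V', v') is the elastic ball-ball collision image of (V, v), then √M·V' = cos(2φ)·W + sin(2φ)·w and √m·v' = sin(2φ)·W − cos(2φ)·w; that is, in billiard coordinates the ball-ball collision acts as the orthogonal reflection of the velocity vector about the line through the origin at angle φ. In particular M·V'² + m·v'² = M·V² + m·v². -/

import Mathlib

/-- In billiard (Sinai) coordinates `W = √M·V`, `w = √m·v`, the elastic
ball-ball collision acts as the orthogonal reflection of the velocity vector
about the line through the origin at angle `φ = arctan √(m/M)`; in particular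
the kinetic energy is conserved. -/
theorem galperin_ball_ball_reflection_in_billiard_coordinates
    (M m V v φ W w V' v' : ℝ) (hM : 0 < M) (hm : 0 < m)
    (hφ : φ = Real.arctan (Real.sqrt (m / M)))
    (hW : W = Real.sqrt M * V) (hw : w = Real.sqrt m * v)
    (hV' : V' = ((M - m) * V + 2 * m * v) / (M + m))
    (hv' : v' = (2 * M * V + (m - M) * v) / (M + m)) :
    Real.sqrt M * V' = Real.cos (2 * φ) * W + Real.sin (2 * φ) * w ∧
    Real.sqrt m * v' = Real.sin (2 * φ) * W - Real.cos (2 * φ) * w ∧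
    M * V' ^ 2 + m * v' ^ 2 = M * V ^ 2 + m * v ^ 2 := by
  have hMm : (0:ℝ) < M + m := by linarith
  have hMm' : M + m ≠ 0 := ne_of_gt hMm
  have hsM : Real.sqrt M > 0 := Real.sqrt_pos.mpr hM
  have hsm : Real.sqrt m > 0 := Real.sqrt_pos.mpr hm
  have hsM2 : Real.sqrt M ^ 2 = M := Real.sq_sqrt hM.le
  have hsm2 : Real.sqrt m ^ 2 = m := Real.sq_sqrt hm.le
  set t := Real.sqrt (m / M) with ht
  have ht2 : t ^ 2 = m / M := Real.sq_sqrt (by positivity)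
  have h1t : (0:ℝ) < 1 + t ^ 2 := by positivity
  have hs1t : Real.sqrt (1 + t ^ 2) ^ 2 = 1 + t ^ 2 := Real.sq_sqrt h1t.le
  have hs1tpos : (0:ℝ) < Real.sqrt (1 + t ^ 2) := Real.sqrt_pos.mpr h1t
  have hcos : Real.cos φ = 1 / Real.sqrt (1 + t ^ 2) := by
    rw [hφ, Real.cos_arctan]
  have hsin : Real.sin φ = t / Real.sqrt (1 + t ^ 2) := by
    rw [hφ, Real.sin_arctan]
  have hcos2 : Real.cos (2 * φ) = (M - m) / (M + m) := by
    rw [Real.cos_two_mul, hcos]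
    rw [div_pow, one_pow, hs1t, ht2]
    field_simp
    ring
  have htval : t * Real.sqrt M = Real.sqrt m := by
    rw [ht, Real.sqrt_div hm.le, div_mul_cancel₀ _ (ne_of_gt hsM)]
  have hMM : Real.sqrt M * Real.sqrt M = M := Real.mul_self_sqrt hM.le
  have htM : t * M = Real.sqrt m * Real.sqrt M := by linear_combination Real.sqrt M * htval - t * hsM2
  have hsin2 : Real.sin (2 * φ) = 2 * Real.sqrt M * Real.sqrt m / (M + m) := by
    rw [Real.sin_two_mul, hsin, hcos]
    have : 2 * (t / Real.sqrt (1 + t ^ 2)) * (1 / Real.sqrt (1 + t ^ 2))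
        = 2 * t / Real.sqrt (1 + t ^ 2) ^ 2 := by ring
    rw [this, hs1t, ht2]
    field_simp
    linear_combination htM
  subst hV' hv' hW hw
  refine ⟨?_, ?_, ?_⟩
  · rw [hcos2, hsin2]; field_simp; linear_combination (-2 * v) * hsm2
  · rw [hcos2, hsin2]; field_simp; linear_combination (-2 * V) * hsM2
  · field_simp; ring
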